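/- If m > 2W₀, then sup_{x∈ℝ} E[U(W(x))] = m/2, while E[U(W(x))] < m/2 for every finite x ∈ ℝ; in particular the supremum is not attained by any portfolio of finite size. Moreover, for x > 0 the function G(x) = E[U(W(x))] satisfies G'(x) = (W₀/√(2π))·e^{−1/(2x²)}·[1 − e^{(m/(x²W₀))(1 − m/(2W₀))}] > 0, so G is strictly increasing on (0,∞), and lim_{x→+∞} G(x) = m/2. -/

import Mathlib

open MeasureTheory ProbabilityTheory Filter
open scoped ENNReal NNReal Topology

open Set

noncomputable section

/-- The truncated utility: `U(w) = m` for `w ≥ m`, `U(w) = w` for `0 ≤ w ≤ m`,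
`U(w) = 0` for `w ≤ 0`. -/
def U4 (m w : ℝ) : ℝ := max 0 (min w m)

/-- Expected utility `G(x) = E[U(W₀ + x W₀ N)]`. -/
def G4 {Ω : Type*} [MeasurableSpace Ω] (P : Measure Ω) (N : Ω → ℝ) (W0 m : ℝ)
    (x : ℝ) : ℝ :=
  ∫ ω, U4 m (W0 + x * W0 * N ω) ∂P

/-! ### The standard normal density and cdf -/

def phi4 (t : ℝ) : ℝ := (Real.sqrt (2 * Real.pi))⁻¹ * Real.exp (-t ^ 2 / 2)

lemma phi4_eq : phi4 = gaussianPDFReal 0 1 := by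
  funext t; simp [phi4, gaussianPDFReal]

lemma phi4_cont : Continuous phi4 := by unfold phi4; fun_prop

lemma phi4_integrable : Integrable phi4 := phi4_eq ▸ integrable_gaussianPDFReal 0 1

lemma phi4_total : ∫ t, phi4 t = 1 := by
  rw [phi4_eq]; exact integral_gaussianPDFReal_eq_one 0 one_ne_zero

lemma phi4_even (t : ℝ) : phi4 (-t) = phi4 t := by simp [phi4]

lemma phi4_hasDeriv (t : ℝ) : HasDerivAt phi4 (-t * phi4 t) t := by
  have h1 : HasDerivAt (fun t : ℝ => -t ^ 2 / 2) (-t) t := by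
    have := ((hasDerivAt_pow 2 t).neg.div_const 2)
    refine this.congr_deriv ?_; push_cast; ring
  have h2 := (h1.exp.const_mul ((Real.sqrt (2 * Real.pi))⁻¹))
  refine h2.congr_deriv ?_; unfold phi4; ring

def Phi4 (t : ℝ) : ℝ := ∫ u in Iic t, phi4 u

lemma Phi4_hasDeriv (t : ℝ) : HasDerivAt Phi4 (phi4 t) t := by
  have he : Phi4 = fun s => Phi4 0 + ∫ u in (0:ℝ)..s, phi4 u := by
    funext s
    rw [← intervalIntegral.integral_Iic_sub_Iic phi4_integrable.integrableOn
      phi4_integrable.integrableOn]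
    unfold Phi4; ring
  rw [he]
  exact (intervalIntegral.integral_hasDerivAt_right
    (phi4_cont.intervalIntegrable 0 t)
    (phi4_cont.stronglyMeasurableAtFilter volume (nhds t))
    phi4_cont.continuousAt).const_add _

lemma Phi4_Ioi (b : ℝ) : ∫ t in Ioi b, phi4 t = 1 - Phi4 b := by
  have h := intervalIntegral.integral_Iic_add_Ioi (b := b) (f := phi4) (μ := volume)
    phi4_integrable.integrableOn phi4_integrable.integrableOn
  rw [phi4_total] at h
  unfold Phi4; linarith

lemma Phi4_zero : Phi4 0 = 1 / 2 := by
  have h1 : Phi4 0 = ∫ t in Ioi (0:ℝ), phi4 t := by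
    calc Phi4 0 = ∫ u in Iic (0:ℝ), phi4 (-u) := by
          unfold Phi4; congr 1; funext u; rw [phi4_even]
      _ = ∫ u in Ioi (-(0:ℝ)), phi4 u := integral_comp_neg_Iic 0 phi4
      _ = ∫ t in Ioi (0:ℝ), phi4 t := by norm_num
  have h2 := Phi4_Ioi 0
  rw [h2] at h1; linarith

/-! ### Basic properties of `U4` and the representation of `G4` -/

lemma U4_cont (m : ℝ) : Continuous (U4 m) :=
  continuous_const.max (continuous_id.min continuous_const)

lemma U4_nonneg (m w : ℝ) : 0 ≤ U4 m w := le_max_left _ _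

lemma U4_le (m w : ℝ) (hm : 0 ≤ m) : U4 m w ≤ m := max_le hm (min_le_right _ _)

lemma integral_gaussianReal_eq (f : ℝ → ℝ) :
    ∫ t, f t ∂(gaussianReal 0 1) = ∫ t, phi4 t * f t := by
  rw [gaussianReal_of_var_ne_zero 0 one_ne_zero]
  have hpdf : gaussianPDF 0 1
      = fun x => ((Real.toNNReal (gaussianPDFReal 0 1 x) : ℝ≥0) : ℝ≥0∞) := rfl
  rw [hpdf, integral_withDensity_eq_integral_smul
    ((measurable_gaussianPDFReal 0 1).real_toNNReal) f]
  congr 1; funext t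
  rw [NNReal.smul_def, smul_eq_mul, Real.coe_toNNReal _ (gaussianPDFReal_nonneg 0 1 t), ← phi4_eq]

lemma G4_repr {Ω : Type*} [MeasurableSpace Ω] (P : Measure Ω) [IsProbabilityMeasure P]
    (N : Ω → ℝ) (hNmeas : Measurable N) (hNlaw : Measure.map N P = gaussianReal 0 1)
    (W0 m x : ℝ) :
    G4 P N W0 m x = ∫ t, phi4 t * U4 m (W0 + x * W0 * t) := by
  have hc : Continuous (fun t : ℝ => U4 m (W0 + x * W0 * t)) :=
    (U4_cont m).comp (by fun_prop)
  unfold G4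
  rw [← integral_map hNmeas.aemeasurable hc.aestronglyMeasurable, hNlaw,
    integral_gaussianReal_eq]

lemma G4_symm {Ω : Type*} [MeasurableSpace Ω] (P : Measure Ω) [IsProbabilityMeasure P]
    (N : Ω → ℝ) (hNmeas : Measurable N) (hNlaw : Measure.map N P = gaussianReal 0 1)
    (W0 m x : ℝ) :
    G4 P N W0 m (-x) = G4 P N W0 m x := by
  rw [G4_repr P N hNmeas hNlaw, G4_repr P N hNmeas hNlaw]
  have h := integral_neg_eq_self (fun t => phi4 t * U4 m (W0 + x * W0 * t)) (volume : Measure ℝ)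
  rw [← h]
  congr 1; funext t
  rw [phi4_even]
  congr 2; ring

/-! ### Closed form of `G4` for positive `x` -/

/-- closed form of the expected utility for positive `x`. -/
def F4 (W0 m x : ℝ) : ℝ :=
  W0 * (Phi4 ((m - W0) / W0 * x⁻¹) - Phi4 (-x⁻¹))
    - x * W0 * (phi4 ((m - W0) / W0 * x⁻¹) - phi4 (-x⁻¹))
    + m * (1 - Phi4 ((m - W0) / W0 * x⁻¹))

lemma integrand_integrable (W0 m x : ℝ) (hm : 0 ≤ m) :
    Integrable (fun t => phi4 t * U4 m (W0 + x * W0 * t)) := by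
  refine Integrable.mono' (phi4_integrable.const_mul m)
    ((phi4_cont.mul ((U4_cont m).comp (by fun_prop))).aestronglyMeasurable)
    (ae_of_all _ fun t => ?_)
  have h1 : 0 ≤ phi4 t := by
    unfold phi4
    positivity
  rw [Real.norm_eq_abs, abs_mul, abs_of_nonneg h1, abs_of_nonneg (U4_nonneg m _)]
  calc phi4 t * U4 m (W0 + x * W0 * t) ≤ phi4 t * m :=
        mul_le_mul_of_nonneg_left (U4_le m _ hm) h1
    _ = m * phi4 t := by ring

lemma G4_closed (W0 m x : ℝ) (hW0 : 0 < W0) (hm : W0 < m) (hx : 0 < x) :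
    (∫ t, phi4 t * U4 m (W0 + x * W0 * t)) = F4 W0 m x := by
  set a : ℝ := -x⁻¹ with ha
  set b : ℝ := (m - W0) / W0 * x⁻¹ with hb
  set g : ℝ → ℝ := fun t => phi4 t * U4 m (W0 + x * W0 * t) with hg
  have hm0 : (0:ℝ) ≤ m := by linarith
  have hgi : Integrable g := integrand_integrable W0 m x hm0
  have hab : a < b := by
    have h1 : a < 0 := by have := inv_pos.mpr hx; rw [ha]; linarith
    have h2 : 0 < b := by
      rw [hb]
      have : 0 < m - W0 := by linarith
      positivity
    linarith
  -- the three pieces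
  have hsplit : (∫ t, g t) = (∫ t in Iic a, g t) + ((∫ t in Ioc a b, g t) + ∫ t in Ioi b, g t) := by
    rw [← setIntegral_union (Ioc_disjoint_Ioi le_rfl) measurableSet_Ioi
        (hgi.integrableOn) (hgi.integrableOn), Ioc_union_Ioi_eq_Ioi hab.le]
    rw [intervalIntegral.integral_Iic_add_Ioi hgi.integrableOn hgi.integrableOn]
  have hpiece1 : (∫ t in Iic a, g t) = 0 := by
    rw [setIntegral_congr_fun measurableSet_Iic (g := fun _ => (0:ℝ)) ?_, integral_zero]
    intro t ht
    have hw : W0 + x * W0 * t ≤ 0 := by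
      have : t ≤ -x⁻¹ := ht
      have h2 : x * W0 * t ≤ x * W0 * (-x⁻¹) := by
        apply mul_le_mul_of_nonneg_left this (by positivity)
      have h3 : x * W0 * (-x⁻¹) = -W0 := by field_simp
      linarith
    have hU : U4 m (W0 + x * W0 * t) = 0 := by
      unfold U4
      rw [min_eq_left (by linarith), max_eq_left hw]
    simp [hg, hU]
  have hpiece3 : (∫ t in Ioi b, g t) = (1 - Phi4 b) * m := by
    rw [setIntegral_congr_fun measurableSet_Ioi (g := fun t => phi4 t * m) ?_]
    · rw [integral_mul_const, Phi4_Ioi]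
    · intro t ht
      have hw : m ≤ W0 + x * W0 * t := by
        have hbt : b < t := ht
        have h2 : x * W0 * b ≤ x * W0 * t := by
          apply mul_le_mul_of_nonneg_left hbt.le (by positivity)
        have h3 : x * W0 * b = m - W0 := by rw [hb]; field_simp
        linarith
      have hU : U4 m (W0 + x * W0 * t) = m := by
        unfold U4
        rw [min_eq_right hw, max_eq_right hm0]
      simp [hg, hU]
  have hpiece2 : (∫ t in Ioc a b, g t)
      = (W0 * Phi4 b - x * W0 * phi4 b) - (W0 * Phi4 a - x * W0 * phi4 a) := by
    have hcongr : (∫ t in Ioc a b, g t) = ∫ t in Ioc a b, phi4 t * (W0 + x * W0 * t) := by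
      apply setIntegral_congr_fun measurableSet_Ioc
      intro t ht
      have h0 : 0 ≤ W0 + x * W0 * t := by
        have h2 : x * W0 * a ≤ x * W0 * t := by
          apply mul_le_mul_of_nonneg_left ht.1.le (by positivity)
        have h3 : x * W0 * a = -W0 := by rw [ha]; field_simp
        linarith
      have h1 : W0 + x * W0 * t ≤ m := by
        have h2 : x * W0 * t ≤ x * W0 * b := by
          apply mul_le_mul_of_nonneg_left ht.2 (by positivity)
        have h3 : x * W0 * b = m - W0 := by rw [hb]; field_simp
        linarith
      have hU : U4 m (W0 + x * W0 * t) = W0 + x * W0 * t := by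
        unfold U4
        rw [min_eq_left h1, max_eq_right h0]
      simp [hg, hU]
    rw [hcongr, ← intervalIntegral.integral_of_le hab.le]
    apply intervalIntegral.integral_eq_sub_of_hasDerivAt
      (f := fun t => W0 * Phi4 t - x * W0 * phi4 t)
    · intro t _
      have h1 := ((Phi4_hasDeriv t).const_mul W0).sub ((phi4_hasDeriv t).const_mul (x * W0))
      refine h1.congr_deriv ?_
      ring
    · exact (phi4_cont.mul (by fun_prop)).intervalIntegrable a b
  rw [hsplit, hpiece1, hpiece2, hpiece3]
  unfold F4
  rw [← ha, ← hb]
  ring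

/-! ### Derivative of the closed form -/

lemma F4_hasDeriv (W0 m x : ℝ) (hW0 : 0 < W0) (hx : 0 < x) :
    HasDerivAt (F4 W0 m)
      (W0 * (phi4 x⁻¹ - phi4 ((m - W0) / W0 * x⁻¹))) x := by
  have hx' : x ≠ 0 := hx.ne'
  set c : ℝ := (m - W0) / W0 with hc
  have hinv : HasDerivAt (fun y : ℝ => y⁻¹) (-(x ^ 2)⁻¹) x := hasDerivAt_inv hx'
  have hbd : HasDerivAt (fun y : ℝ => c * y⁻¹) (c * -(x ^ 2)⁻¹) x := hinv.const_mul c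
  have had : HasDerivAt (fun y : ℝ => -y⁻¹) ((x ^ 2)⁻¹) x := by
    exact hinv.neg.congr_deriv (neg_neg _)
  have hPb : HasDerivAt (fun y : ℝ => Phi4 (c * y⁻¹)) (phi4 (c * x⁻¹) * (c * -(x ^ 2)⁻¹)) x :=
    by have h := (Phi4_hasDeriv (c * x⁻¹)).comp x hbd; exact h
  have hPa : HasDerivAt (fun y : ℝ => Phi4 (-y⁻¹)) (phi4 (-x⁻¹) * (x ^ 2)⁻¹) x :=
    by have h := (Phi4_hasDeriv (-x⁻¹)).comp x had; exact h
  have hfb : HasDerivAt (fun y : ℝ => phi4 (c * y⁻¹))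
      ((-(c * x⁻¹) * phi4 (c * x⁻¹)) * (c * -(x ^ 2)⁻¹)) x :=
    by have h := (phi4_hasDeriv (c * x⁻¹)).comp x hbd; exact h
  have hfa : HasDerivAt (fun y : ℝ => phi4 (-y⁻¹))
      ((-(-x⁻¹) * phi4 (-x⁻¹)) * (x ^ 2)⁻¹) x :=
    by have h := (phi4_hasDeriv (-x⁻¹)).comp x had; exact h
  have hmain :
      HasDerivAt (F4 W0 m)
        ((phi4 (c * x⁻¹) * (c * -(x ^ 2)⁻¹) - phi4 (-x⁻¹) * (x ^ 2)⁻¹) * W0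
          - ((1 * W0) * (phi4 (c * x⁻¹) - phi4 (-x⁻¹))
             + (x * W0) * ((-(c * x⁻¹) * phi4 (c * x⁻¹)) * (c * -(x ^ 2)⁻¹)
                - (-(-x⁻¹) * phi4 (-x⁻¹)) * (x ^ 2)⁻¹))
          + m * (0 - phi4 (c * x⁻¹) * (c * -(x ^ 2)⁻¹))) x := by
    have h1 := (hPb.sub hPa).mul_const W0
    have h2 := ((hasDerivAt_id x).mul_const W0).mul (hfb.sub hfa)
    have h3 := ((hasDerivAt_const x (1:ℝ)).sub hPb).const_mul m
    have := (h1.sub h2).add h3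
    refine this.congr_of_eventuallyEq (Filter.Eventually.of_forall fun y => ?_)
    unfold F4
    rw [← hc]
    simp only [id_eq, Pi.add_apply, Pi.sub_apply, Pi.mul_apply]
    ring
  convert hmain using 1
  rw [phi4_even x⁻¹]
  have hmeq : m = c * W0 + W0 := by
    rw [hc]; field_simp; ring
  rw [hmeq]
  field_simp
  ring

lemma deriv_target_eq (W0 m x : ℝ) (hW0 : 0 < W0) (hx : 0 < x) :
    W0 * (phi4 x⁻¹ - phi4 ((m - W0) / W0 * x⁻¹))
      = W0 / Real.sqrt (2 * Real.pi) * Real.exp (-(1 / (2 * x ^ 2))) *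
          (1 - Real.exp (m / (x ^ 2 * W0) * (1 - m / (2 * W0)))) := by
  have hx' : x ≠ 0 := hx.ne'
  have hW0' : W0 ≠ 0 := hW0.ne'
  have e1 : Real.exp (-(x⁻¹) ^ 2 / 2) = Real.exp (-(1 / (2 * x ^ 2))) := by
    congr 1; field_simp
  have e2 : Real.exp (-((m - W0) / W0 * x⁻¹) ^ 2 / 2)
      = Real.exp (-(1 / (2 * x ^ 2)) + m / (x ^ 2 * W0) * (1 - m / (2 * W0))) := by
    congr 1; field_simp; ring
  unfold phi4
  rw [e1, e2, Real.exp_add, div_eq_mul_inv W0]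
  ring

lemma deriv_target_pos (W0 m x : ℝ) (hW0 : 0 < W0) (hm : 2 * W0 < m) (hx : 0 < x) :
    0 < W0 / Real.sqrt (2 * Real.pi) * Real.exp (-(1 / (2 * x ^ 2))) *
          (1 - Real.exp (m / (x ^ 2 * W0) * (1 - m / (2 * W0)))) := by
  have h1 : 0 < W0 / Real.sqrt (2 * Real.pi) := by positivity
  have h2 : 0 < Real.exp (-(1 / (2 * x ^ 2))) := Real.exp_pos _
  have h3 : Real.exp (m / (x ^ 2 * W0) * (1 - m / (2 * W0))) < 1 := by
    rw [Real.exp_lt_one_iff]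
    apply mul_neg_of_pos_of_neg
    · have : 0 < m := by linarith
      positivity
    · have : 1 < m / (2 * W0) := by
        rw [lt_div_iff₀ (by linarith)]
        linarith
      linarith
  have h4 : 0 < 1 - Real.exp (m / (x ^ 2 * W0) * (1 - m / (2 * W0))) := by linarith
  positivity

/-! ### The limit of the closed form at `+∞` -/

lemma exp_neg_lipschitz (p q : ℝ) (hp : 0 ≤ p) (hq : 0 ≤ q) :
    |Real.exp (-p) - Real.exp (-q)| ≤ |p - q| := by
  wlog h : p ≤ q generalizing p q
  · rw [abs_sub_comm, abs_sub_comm p q]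
    exact this q p hq hp (le_of_not_ge h)
  have h1 : Real.exp (-q) = Real.exp (-p) * Real.exp (p - q) := by
    rw [← Real.exp_add]; ring_nf
  have h2 : Real.exp (-p) ≤ 1 := Real.exp_le_one_iff.mpr (by linarith)
  have h3 : Real.exp (p - q) ≤ 1 := Real.exp_le_one_iff.mpr (by linarith)
  have h4 : 1 + (p - q) ≤ Real.exp (p - q) := by have := Real.add_one_le_exp (p - q); linarith
  have h5 : 0 < Real.exp (-p) := Real.exp_pos _
  rw [abs_of_nonneg (by nlinarith), abs_of_nonpos (by linarith)]
  nlinarith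

lemma F4_tendsto (W0 m : ℝ) (hW0 : 0 < W0) :
    Tendsto (F4 W0 m) atTop (𝓝 (m / 2)) := by
  obtain ⟨c, hc⟩ : ∃ c : ℝ, c = (m - W0) / W0 := ⟨_, rfl⟩
  have hinv : Tendsto (fun x : ℝ => x⁻¹) atTop (𝓝 0) := tendsto_inv_atTop_zero
  have hb : Tendsto (fun x : ℝ => c * x⁻¹) atTop (𝓝 0) := by
    simpa using hinv.const_mul c
  have ha : Tendsto (fun x : ℝ => -x⁻¹) atTop (𝓝 0) := by
    simpa using hinv.neg
  have hPhiC : ContinuousAt Phi4 0 := (Phi4_hasDeriv 0).continuousAt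
  have hPb : Tendsto (fun x : ℝ => Phi4 (c * x⁻¹)) atTop (𝓝 (1 / 2)) := by
    rw [← Phi4_zero]; exact hPhiC.tendsto.comp hb
  have hPa : Tendsto (fun x : ℝ => Phi4 (-x⁻¹)) atTop (𝓝 (1 / 2)) := by
    rw [← Phi4_zero]; exact hPhiC.tendsto.comp ha
  -- the middle term tends to 0
  have hmid : Tendsto (fun x : ℝ => x * W0 * (phi4 (c * x⁻¹) - phi4 (-x⁻¹))) atTop (𝓝 0) := by
    apply squeeze_zero_norm' (a := fun x : ℝ => W0 * (Real.sqrt (2 * Real.pi))⁻¹ *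
      ((c ^ 2 + 1) / 2) * x⁻¹)
    · filter_upwards [eventually_gt_atTop (0:ℝ)] with x hx
      have hx' : x ≠ 0 := hx.ne'
      have key : |phi4 (c * x⁻¹) - phi4 (-x⁻¹)|
          ≤ (Real.sqrt (2 * Real.pi))⁻¹ * ((c ^ 2 + 1) / 2 * (x ^ 2)⁻¹) := by
        unfold phi4
        rw [← mul_sub, abs_mul, abs_of_nonneg (by positivity)]
        apply mul_le_mul_of_nonneg_left _ (by positivity)
        have h1 : -(c * x⁻¹) ^ 2 / 2 = -((c * x⁻¹) ^ 2 / 2) := by ring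
        have h2 : -(-x⁻¹) ^ 2 / 2 = -((x⁻¹) ^ 2 / 2) := by ring
        rw [h1, h2]
        calc |Real.exp (-((c * x⁻¹) ^ 2 / 2)) - Real.exp (-((x⁻¹) ^ 2 / 2))|
            ≤ |(c * x⁻¹) ^ 2 / 2 - (x⁻¹) ^ 2 / 2| :=
              exp_neg_lipschitz _ _ (div_nonneg (sq_nonneg _) two_pos.le)
                (div_nonneg (sq_nonneg _) two_pos.le)
          _ ≤ (c ^ 2 + 1) / 2 * (x ^ 2)⁻¹ := by
              have e : (c * x⁻¹) ^ 2 / 2 - (x⁻¹) ^ 2 / 2 = (c ^ 2 - 1) / 2 * (x ^ 2)⁻¹ := by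
                simp only [mul_pow, inv_pow]; ring
              rw [e, abs_mul, abs_of_nonneg (inv_nonneg.mpr (sq_nonneg x))]
              apply mul_le_mul_of_nonneg_right _ (inv_nonneg.mpr (sq_nonneg x))
              exact abs_le.mpr ⟨by nlinarith [sq_nonneg c], by nlinarith [sq_nonneg c]⟩
      calc ‖x * W0 * (phi4 (c * x⁻¹) - phi4 (-x⁻¹))‖
          = x * W0 * |phi4 (c * x⁻¹) - phi4 (-x⁻¹)| := by
            rw [Real.norm_eq_abs, abs_mul, abs_of_nonneg (by positivity)]
        _ ≤ x * W0 * ((Real.sqrt (2 * Real.pi))⁻¹ * ((c ^ 2 + 1) / 2 * (x ^ 2)⁻¹)) :=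
            mul_le_mul_of_nonneg_left key (by positivity)
        _ = W0 * (Real.sqrt (2 * Real.pi))⁻¹ * ((c ^ 2 + 1) / 2) * x⁻¹ := by
            field_simp
    · simpa using hinv.const_mul (W0 * (Real.sqrt (2 * Real.pi))⁻¹ * ((c ^ 2 + 1) / 2))
  have hconst : Tendsto (fun _ : ℝ => (1:ℝ)) atTop (𝓝 1) := tendsto_const_nhds
  have h := (((hPb.sub hPa).const_mul W0).sub hmid).add ((hconst.sub hPb).const_mul m)
  have heq : W0 * (1 / 2 - 1 / 2) - 0 + m * (1 - 1 / 2) = m / 2 := by ring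
  rw [heq] at h
  apply h.congr
  intro x
  unfold F4
  rw [← hc]

/-! ### Main theorem -/

/-- if `m > 2W₀` then `sup_x E[U(W(x))] = m/2`, while `E[U(W(x))] < m/2`
for every finite `x`; moreover for `x > 0` the derivative of `G` is
`(W₀/√(2π)) e^{−1/(2x²)} (1 − e^{(m/(x²W₀))(1 − m/(2W₀))}) > 0`, `G` is strictly
increasing on `(0,∞)`, and `G(x) → m/2` as `x → +∞`. -/
theorem stmt4 {Ω : Type*} [MeasurableSpace Ω] (P : Measure Ω) [IsProbabilityMeasure P]
    (N : Ω → ℝ) (hNmeas : Measurable N)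
    (hNlaw : Measure.map N P = gaussianReal 0 1)
    (W0 m : ℝ) (hW0 : 0 < W0) (hm : 2 * W0 < m) :
    (⨆ x : ℝ, G4 P N W0 m x) = m / 2 ∧
    (∀ x : ℝ, G4 P N W0 m x < m / 2) ∧
    (∀ x : ℝ, 0 < x →
      HasDerivAt (G4 P N W0 m)
        (W0 / Real.sqrt (2 * Real.pi) * Real.exp (-(1 / (2 * x ^ 2))) *
          (1 - Real.exp (m / (x ^ 2 * W0) * (1 - m / (2 * W0))))) x ∧
      0 < W0 / Real.sqrt (2 * Real.pi) * Real.exp (-(1 / (2 * x ^ 2))) *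
          (1 - Real.exp (m / (x ^ 2 * W0) * (1 - m / (2 * W0))))) ∧
    StrictMonoOn (G4 P N W0 m) (Set.Ioi 0) ∧
    Tendsto (G4 P N W0 m) atTop (𝓝 (m / 2)) := by
  have hmW0 : W0 < m := by linarith
  have hGF : ∀ x : ℝ, 0 < x → G4 P N W0 m x = F4 W0 m x := by
    intro x hx
    rw [G4_repr P N hNmeas hNlaw, G4_closed W0 m x hW0 hmW0 hx]
  -- limit
  have hlim : Tendsto (G4 P N W0 m) atTop (𝓝 (m / 2)) := by
    apply (F4_tendsto W0 m hW0).congr'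
    filter_upwards [eventually_gt_atTop (0:ℝ)] with x hx
    exact (hGF x hx).symm
  -- derivative
  have hd : ∀ x : ℝ, 0 < x →
      HasDerivAt (G4 P N W0 m)
        (W0 / Real.sqrt (2 * Real.pi) * Real.exp (-(1 / (2 * x ^ 2))) *
          (1 - Real.exp (m / (x ^ 2 * W0) * (1 - m / (2 * W0))))) x := by
    intro x hx
    have hev : F4 W0 m =ᶠ[𝓝 x] G4 P N W0 m := by
      filter_upwards [Ioi_mem_nhds hx] with y hy
      exact (hGF y hy).symm
    have h1 := F4_hasDeriv W0 m x hW0 hx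
    rw [deriv_target_eq W0 m x hW0 hx] at h1
    exact hev.hasDerivAt_iff.mp h1
  -- strict monotonicity
  have hmono : StrictMonoOn (G4 P N W0 m) (Set.Ioi 0) := by
    apply strictMonoOn_of_deriv_pos (convex_Ioi 0)
    · intro y hy
      exact ((hd y hy).continuousAt).continuousWithinAt
    · intro y hy
      rw [interior_Ioi] at hy
      rw [(hd y hy).deriv]
      exact deriv_target_pos W0 m y hW0 hm hy
  -- strict bound
  have hlt : ∀ x : ℝ, G4 P N W0 m x < m / 2 := by
    have hposlt : ∀ x : ℝ, 0 < x → G4 P N W0 m x < m / 2 := by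
      intro x hx
      have hx1 : x + 1 ∈ Set.Ioi (0:ℝ) := by simp; linarith
      have h1 : G4 P N W0 m x < G4 P N W0 m (x + 1) := hmono hx hx1 (by linarith)
      have h2 : G4 P N W0 m (x + 1) ≤ m / 2 := by
        apply ge_of_tendsto hlim
        filter_upwards [eventually_ge_atTop (x + 1)] with y hy
        exact hmono.monotoneOn hx1 (by simp; linarith [hx1.out]) hy
      linarith
    have hzero : G4 P N W0 m 0 = W0 := by
      unfold G4
      have hU : ∀ ω : Ω, U4 m (W0 + 0 * W0 * N ω) = W0 := by
        intro ω
        have : W0 + 0 * W0 * N ω = W0 := by ring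
        rw [this]
        unfold U4
        rw [min_eq_left hmW0.le, max_eq_right hW0.le]
      simp only [hU]
      simp
    intro x
    rcases lt_trichotomy x 0 with hx | hx | hx
    · have hs := G4_symm P N hNmeas hNlaw W0 m (-x)
      rw [neg_neg] at hs
      rw [hs]
      exact hposlt (-x) (by linarith)
    · rw [hx, hzero]; linarith
    · exact hposlt x hx
  -- supremum
  have hbdd : BddAbove (Set.range (G4 P N W0 m)) := by
    refine ⟨m / 2, ?_⟩
    rintro _ ⟨x, rfl⟩
    exact (hlt x).le
  have hsup : (⨆ x : ℝ, G4 P N W0 m x) = m / 2 := by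
    apply le_antisymm
    · exact ciSup_le fun x => (hlt x).le
    · exact le_of_tendsto hlim (Eventually.of_forall fun x => le_ciSup hbdd x)
  exact ⟨hsup, hlt, fun x hx => ⟨hd x hx, deriv_target_pos W0 m x hW0 hm hx⟩, hmono, hlim⟩

end
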